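/- Every suffix of the Thue-Morse word TM₀ begins in an abelian 6-power; that is, for every position i ≥ 0 there is a nonempty prefix of the suffix of TM₀ starting at position i which is an abelian 6-power. -/

import Mathlib

/-- The factor of the infinite word `ω` of length `n` starting at position `i`. -/
def factor {A : Type*} (ω : ℕ → A) (i n : ℕ) : List A :=
  (List.range n).map fun j => ω (i + j)

/-- The word `ω` has an abelian `k`-power with abelian period `ℓ > 0` starting at
position `i`. -/
def AbelianPowerAt {A : Type*} [DecidableEq A] (ω : ℕ → A) (i k ℓ : ℕ) : Prop :=
  0 < ℓ ∧ ∀ j₁ j₂ : ℕ, j₁ < k → j₂ < k → ∀ a : A,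
    (factor ω (i + j₁ * ℓ) ℓ).count a = (factor ω (i + j₂ * ℓ) ℓ).count a

open Fin.NatCast in
/-- The Thue-Morse word: `TM n` is the parity of the number of `1`'s in the
binary expansion of `n`. -/
def TM : ℕ → Fin 2 := fun n => ((Nat.digits 2 n).count 1 : Fin 2)

lemma TM_zero : TM 0 = 0 := by simp [TM]

lemma TM_two_mul (n : ℕ) : TM (2 * n) = TM n := by
  rcases Nat.eq_zero_or_pos n with h | h
  · simp [h]
  · unfold TM
    rw [Nat.digits_def' (by norm_num : 1 < 2) (by omega : 0 < 2 * n)]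
    have h1 : 2 * n % 2 = 0 := by omega
    have h2 : 2 * n / 2 = n := by omega
    rw [h1, h2, List.count_cons_of_ne (by norm_num)]

lemma TM_two_mul_add_one (n : ℕ) : TM (2 * n + 1) = 1 + TM n := by
  unfold TM
  rw [Nat.digits_def' (by norm_num : 1 < 2) (by omega : 0 < 2 * n + 1)]
  have h1 : (2 * n + 1) % 2 = 1 := by omega
  have h2 : (2 * n + 1) / 2 = n := by omega
  rw [h1, h2, List.count_cons_self]
  push_cast
  apply Fin.ext
  simp [Fin.val_add, Fin.val_natCast]
  omega

lemma TM_val_pair (k : ℕ) : (TM (2 * k)).val + (TM (2 * k + 1)).val = 1 := by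
  rw [TM_two_mul, TM_two_mul_add_one, Fin.val_add, Fin.val_one]
  have := (TM k).isLt
  omega

lemma sum_even_block (q m : ℕ) :
    ∑ j ∈ Finset.range (2 * m), (TM (2 * q + j)).val = m := by
  induction m with
  | zero => simp
  | succ m ih =>
    have h2 : 2 * (m + 1) = (2 * m) + 1 + 1 := by ring
    rw [h2, Finset.sum_range_succ, Finset.sum_range_succ, ih]
    have e : 2 * q + 2 * m = 2 * (q + m) := by ring
    have e2 : 2 * q + (2 * m + 1) = 2 * (q + m) + 1 := by ring
    rw [e, e2]
    have := TM_val_pair (q + m)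
    omega

lemma sum_odd_block (q m : ℕ) :
    (TM (2 * q)).val + ∑ j ∈ Finset.range (2 * m), (TM (2 * q + 1 + j)).val
      = m + (TM (2 * q + 2 * m)).val := by
  have h1 : ∑ j ∈ Finset.range (2 * m + 1), (TM (2 * q + j)).val
      = m + (TM (2 * q + 2 * m)).val := by
    rw [Finset.sum_range_succ, sum_even_block]
  have h2 : ∑ j ∈ Finset.range (2 * m + 1), (TM (2 * q + j)).val
      = (∑ j ∈ Finset.range (2 * m), (TM (2 * q + 1 + j)).val) + (TM (2 * q)).val := by
    rw [Finset.sum_range_succ']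
    congr 1
    exact Finset.sum_congr rfl fun j _ => by
      rw [show 2 * q + (j + 1) = 2 * q + 1 + j from by ring]
  omega

lemma TM_add_mul_pow (t : ℕ) : ∀ n j : ℕ, n < 2 ^ t → TM (n + j * 2 ^ t) = TM n + TM j := by
  induction t with
  | zero =>
    intro n j h
    interval_cases n
    simp [TM_zero]
  | succ t ih =>
    intro n j h
    have hp : (2 : ℕ) ^ (t + 1) = 2 * 2 ^ t := by ring
    rcases Nat.even_or_odd n with ⟨n', hn⟩ | ⟨n', hn⟩
    · have hn' : n' < 2 ^ t := by omega
      have e : n + j * 2 ^ (t + 1) = 2 * (n' + j * 2 ^ t) := by subst hn; rw [hp]; ring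
      have e2 : n = 2 * n' := by omega
      rw [e, TM_two_mul, ih n' j hn', e2, TM_two_mul]
    · have hn' : n' < 2 ^ t := by omega
      have e : n + j * 2 ^ (t + 1) = 2 * (n' + j * 2 ^ t) + 1 := by subst hn; rw [hp]; ring
      have e2 : n = 2 * n' + 1 := by omega
      rw [e, TM_two_mul_add_one, ih n' j hn', e2, TM_two_mul_add_one]
      rw [add_assoc]

lemma TM_six_mul : ∀ j : ℕ, j ≤ 6 → TM (6 * j) = 0 := by
  have t1 : TM 1 = 1 := by
    show TM (2 * 0 + 1) = 1; rw [TM_two_mul_add_one, TM_zero]; decide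
  have t2 : TM 2 = 1 := by show TM (2 * 1) = 1; rw [TM_two_mul]; exact t1
  have t3 : TM 3 = 0 := by
    show TM (2 * 1 + 1) = 0; rw [TM_two_mul_add_one, t1]; decide
  have t4 : TM 4 = 1 := by show TM (2 * 2) = 1; rw [TM_two_mul]; exact t2
  have t6 : TM 6 = 0 := by show TM (2 * 3) = 0; rw [TM_two_mul]; exact t3
  have t7 : TM 7 = 1 := by
    show TM (2 * 3 + 1) = 1; rw [TM_two_mul_add_one, t3]; decide
  have t9 : TM 9 = 0 := by
    show TM (2 * 4 + 1) = 0; rw [TM_two_mul_add_one, t4]; decide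
  have t12 : TM 12 = 0 := by show TM (2 * 6) = 0; rw [TM_two_mul]; exact t6
  have t15 : TM 15 = 0 := by
    show TM (2 * 7 + 1) = 0; rw [TM_two_mul_add_one, t7]; decide
  have t18 : TM 18 = 0 := by show TM (2 * 9) = 0; rw [TM_two_mul]; exact t9
  have t24 : TM 24 = 0 := by show TM (2 * 12) = 0; rw [TM_two_mul]; exact t12
  have t30 : TM 30 = 0 := by show TM (2 * 15) = 0; rw [TM_two_mul]; exact t15
  have t36 : TM 36 = 0 := by show TM (2 * 18) = 0; rw [TM_two_mul]; exact t18
  intro j hj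
  interval_cases j
  · simpa using TM_zero
  · simpa using t6
  · simpa using t12
  · simpa using t18
  · simpa using t24
  · simpa using t30
  · simpa using t36

lemma fin2_cases (x : Fin 2) : x = 0 ∨ x = 1 := by fin_cases x <;> simp

/-- Each block of length `6 * 2^t` starting at `i + j * (6 * 2^t)` for `j < 6`
contains exactly `3 * 2^t` ones. -/
lemma sum_block_const (i t : ℕ) (hi : i < 2 ^ t) (j : ℕ) (hj : j < 6) :
    ∑ k ∈ Finset.range (6 * 2 ^ t), (TM (i + j * (6 * 2 ^ t) + k)).val = 3 * 2 ^ t := by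
  have hL : 6 * 2 ^ t = 2 * (3 * 2 ^ t) := by ring
  rcases Nat.even_or_odd i with ⟨q, hq⟩ | ⟨q, hq⟩
  · have e : i + j * (6 * 2 ^ t) = 2 * (q + 3 * j * 2 ^ t) := by subst hq; ring
    rw [e, hL, sum_even_block]
  · -- i = 2q + 1
    have e : i + j * (6 * 2 ^ t) = 2 * (q + 3 * j * 2 ^ t) + 1 := by subst hq; ring
    have key := sum_odd_block (q + 3 * j * 2 ^ t) (3 * 2 ^ t)
    have h2q : 2 * q < 2 ^ t := by omega
    have hL1 : TM (2 * (q + 3 * j * 2 ^ t)) = TM (2 * q) := by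
      rw [show 2 * (q + 3 * j * 2 ^ t) = 2 * q + (6 * j) * 2 ^ t from by ring,
        TM_add_mul_pow t (2 * q) (6 * j) h2q, TM_six_mul j (by omega), add_zero]
    have hL2 : TM (2 * (q + 3 * j * 2 ^ t) + 2 * (3 * 2 ^ t)) = TM (2 * q) := by
      rw [show 2 * (q + 3 * j * 2 ^ t) + 2 * (3 * 2 ^ t)
          = 2 * q + (6 * (j + 1)) * 2 ^ t from by ring,
        TM_add_mul_pow t (2 * q) (6 * (j + 1)) h2q, TM_six_mul (j + 1) (by omega), add_zero]
    rw [hL1, hL2] at key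
    rw [e, hL]
    omega

lemma count_one_factor (p : ℕ) (ℓ : ℕ) :
    (factor TM p ℓ).count 1 = ∑ j ∈ Finset.range ℓ, (TM (p + j)).val := by
  induction ℓ with
  | zero => simp [factor]
  | succ n ih =>
    have : factor TM p (n + 1) = factor TM p n ++ [TM (p + n)] := by
      unfold factor
      rw [List.range_succ, List.map_append]
      rfl
    rw [this, List.count_append, ih, Finset.sum_range_succ]
    rcases fin2_cases (TM (p + n)) with h | h <;> simp [h]

lemma count_zero_add_count_one (l : List (Fin 2)) : l.count 0 + l.count 1 = l.length := by
  induction l with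
  | nil => simp
  | cons x l ih =>
    rcases fin2_cases x with h | h <;> simp [h, List.count_cons] <;> omega

/-- Each suffix of the Thue-Morse word begins in an abelian 6-power. -/
theorem thueMorse_suffixes_begin_in_abelian_six_power (i : ℕ) :
    ∃ ℓ : ℕ, AbelianPowerAt TM i 6 ℓ := by
  refine ⟨6 * 2 ^ i, ?_⟩
  unfold AbelianPowerAt
  constructor
  · positivity
  · intro j₁ j₂ h₁ h₂ a
    have hi : i < 2 ^ i := Nat.lt_two_pow_self
    have key : (factor TM (i + j₁ * (6 * 2 ^ i)) (6 * 2 ^ i)).count 1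
        = (factor TM (i + j₂ * (6 * 2 ^ i)) (6 * 2 ^ i)).count 1 := by
      rw [count_one_factor, count_one_factor,
        sum_block_const i i hi j₁ h₁, sum_block_const i i hi j₂ h₂]
    have len : ∀ p : ℕ, (factor TM p (6 * 2 ^ i)).length = 6 * 2 ^ i := by
      intro p; simp [factor]
    rcases fin2_cases a with h | h
    · subst h
      have l1 := count_zero_add_count_one (factor TM (i + j₁ * (6 * 2 ^ i)) (6 * 2 ^ i))
      have l2 := count_zero_add_count_one (factor TM (i + j₂ * (6 * 2 ^ i)) (6 * 2 ^ i))
      rw [len] at l1 l2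
      omega
    · subst h
      exact key
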